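/- Let Θ, ℋ, 𝒴 be finite sets and let θ, θ̃ (both Θ-valued), H (ℋ-valued), and Y (𝒴-valued) be random variables on a common probability space. Suppose k(· | ν, h) is a pmf on 𝒴 such that P(Y = y | θ = ν, H = h) = k(y | ν, h) whenever P(θ = ν, H = h) > 0, and suppose Y is conditionally independent of θ̃ given (θ, H). Let m(y | τ, h) = P(Y = y | θ̃ = τ, H = h) denote the conditional pmf of Y given (θ̃, H). Then, in [0,∞]: E[ D_KL( k(· | θ, H) ‖ m(· | θ̃, H) ) ] ≤ E[ D_KL( k(· | θ, H) ‖ k(· | θ̃, H) ) ]. That is, predicting with the posterior predictive given θ̃ incurs no more expected KL error than plugging θ̃ into the likelihood in place of θ. -/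

import Mathlib

/-!
Statement 9 (change of measure upper bound): if `P(Y = y | θ = ν, H = h) = k(y|ν,h)` on the
support of `(θ, H)` and `Y ⟂ θ̃ | (θ, H)` (vanishing conditional mutual information), then
`E[D_KL(k(·|θ,H) ‖ m(·|θ̃,H))] ≤ E[D_KL(k(·|θ,H) ‖ k(·|θ̃,H))]`, where `m(·|τ,h)` is the true
conditional law of `Y` given `(θ̃, H) = (τ, h)`.
-/

open scoped Classical ENNReal

noncomputable section

/-- Probability of the event `X = a` under the pmf `p` on a finite sample space. -/
def pr {Ω : Type*} [Fintype Ω] (p : Ω → ℝ) {A : Type*} (X : Ω → A) (a : A) : ℝ :=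
  ∑ ω, if X ω = a then p ω else 0

/-- Conditional pmf of `Y` given `X = a`, evaluated at `b` (with the convention `0/0 = 0`). -/
def condPr {Ω : Type*} [Fintype Ω] (p : Ω → ℝ) {A B : Type*}
    (Y : Ω → B) (X : Ω → A) (b : B) (a : A) : ℝ :=
  pr p (fun ω => (Y ω, X ω)) (b, a) / pr p X a

/-- Shannon entropy of a random variable (in nats). -/
def entropy {Ω : Type*} [Fintype Ω] (p : Ω → ℝ) {A : Type*} [Fintype A] (X : Ω → A) : ℝ :=
  ∑ a, Real.negMulLog (pr p X a)

/-- Conditional mutual information `I(X;Y|Z) = H(X,Z) + H(Y,Z) - H(X,Y,Z) - H(Z)` (in nats). -/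
def condMutualInfo {Ω : Type*} [Fintype Ω] (p : Ω → ℝ) {A B C : Type*}
    [Fintype A] [Fintype B] [Fintype C] (X : Ω → A) (Y : Ω → B) (Z : Ω → C) : ℝ :=
  entropy p (fun ω => (X ω, Z ω)) + entropy p (fun ω => (Y ω, Z ω))
    - entropy p (fun ω => ((X ω, Y ω), Z ω)) - entropy p Z

/-- KL divergence between pmfs on a finite set, valued in `[0,∞]`. -/
def klDivF {A : Type*} [Fintype A] (p q : A → ℝ) : ℝ≥0∞ :=
  if ∀ a, q a = 0 → p a = 0 then ENNReal.ofReal (∑ a, p a * Real.log (p a / q a)) else ⊤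

open Finset

section Aux

lemma aux_log_ge {x : ℝ} (hx : 0 < x) : 1 - x⁻¹ ≤ Real.log x := by
  have h := Real.log_le_sub_one_of_pos (inv_pos.mpr hx)
  rw [Real.log_inv] at h
  linarith

lemma aux_log_gt {x : ℝ} (hx : 0 < x) (hx1 : x ≠ 1) : 1 - x⁻¹ < Real.log x := by
  have h := Real.log_lt_sub_one_of_pos (inv_pos.mpr hx) (by
    simpa [inv_eq_one] using hx1)
  rw [Real.log_inv] at h
  linarith

lemma aux_term_bound {f g : ℝ} (hf : 0 ≤ f) (hg : 0 ≤ g) (habs : g = 0 → f = 0) :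
    f - g ≤ f * Real.log (f / g) := by
  rcases hf.eq_or_lt with h0 | hfpos
  · simp [← h0]; linarith
  · have hgpos : 0 < g := by
      rcases hg.eq_or_lt with h0 | h
      · exact absurd (habs h0.symm) (by positivity)
      · exact h
    have hr : 0 < f / g := by positivity
    have hlog := aux_log_ge hr
    have hinv : (f / g)⁻¹ = g / f := by rw [inv_div]
    rw [hinv] at hlog
    have hmul := mul_le_mul_of_nonneg_left hlog (le_of_lt hfpos)
    have hfg : f * (1 - g / f) = f - g := by field_simp
    rw [hfg] at hmul
    linarith

lemma aux_term_eq {f g : ℝ} (hf : 0 ≤ f) (hg : 0 ≤ g) (habs : g = 0 → f = 0)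
    (heq : f * Real.log (f / g) ≤ f - g) : f = g := by
  rcases hf.eq_or_lt with h0 | hfpos
  · have : (0:ℝ) ≤ 0 - g := by simpa [← h0] using heq
    linarith [hg, this]
  · have hgpos : 0 < g := by
      rcases hg.eq_or_lt with h0 | h
      · exact absurd (habs h0.symm) (by positivity)
      · exact h
    by_contra hne
    have hr : 0 < f / g := by positivity
    have hr1 : f / g ≠ 1 := by
      intro h1
      exact hne (by field_simp at h1; linarith)
    have hlog := aux_log_gt hr hr1
    have hinv : (f / g)⁻¹ = g / f := by rw [inv_div]
    rw [hinv] at hlog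
    have hmul := mul_lt_mul_of_pos_left hlog hfpos
    have hfg : f * (1 - g / f) = f - g := by field_simp
    rw [hfg] at hmul
    linarith

variable {A : Type*} [Fintype A]

lemma aux_gibbs (f g : A → ℝ) (hf : ∀ a, 0 ≤ f a) (hg : ∀ a, 0 ≤ g a)
    (hsum : ∑ a, g a ≤ ∑ a, f a) (habs : ∀ a, g a = 0 → f a = 0) :
    0 ≤ ∑ a, f a * Real.log (f a / g a) := by
  have h := Finset.sum_le_sum (s := Finset.univ)
    (f := fun a => f a - g a) (g := fun a => f a * Real.log (f a / g a))
    (fun a _ => aux_term_bound (hf a) (hg a) (habs a))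
  rw [Finset.sum_sub_distrib] at h
  linarith

lemma aux_gibbs_eq (f g : A → ℝ) (hf : ∀ a, 0 ≤ f a) (hg : ∀ a, 0 ≤ g a)
    (hsum : ∑ a, g a ≤ ∑ a, f a) (habs : ∀ a, g a = 0 → f a = 0)
    (hle : ∑ a, f a * Real.log (f a / g a) ≤ 0) : ∀ a, f a = g a := by
  have hterm : ∀ a ∈ Finset.univ, (0:ℝ) ≤ f a * Real.log (f a / g a) - (f a - g a) :=
    fun a _ => sub_nonneg.mpr (aux_term_bound (hf a) (hg a) (habs a))
  have hzero : ∑ a, (f a * Real.log (f a / g a) - (f a - g a)) ≤ 0 := by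
    rw [Finset.sum_sub_distrib, Finset.sum_sub_distrib]
    linarith
  have hall := (Finset.sum_eq_zero_iff_of_nonneg hterm).mp
    (le_antisymm hzero (Finset.sum_nonneg hterm))
  intro a
  exact aux_term_eq (hf a) (hg a) (habs a) (by have := hall a (Finset.mem_univ a); linarith)

end Aux

section PR
variable {Ω : Type*} [Fintype Ω] {p : Ω → ℝ}

lemma aux_pr_nonneg (hp0 : ∀ ω, 0 ≤ p ω) {A : Type*} (X : Ω → A) (a : A) :
    0 ≤ pr p X a :=
  Finset.sum_nonneg fun ω _ => by by_cases h : X ω = a <;> simp [pr, h, hp0 ω]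

lemma aux_pr_self (hp0 : ∀ ω, 0 ≤ p ω) {A : Type*} (X : Ω → A) (ω : Ω) :
    p ω ≤ pr p X (X ω) := by
  have := Finset.single_le_sum (f := fun ω' => if X ω' = X ω then p ω' else 0)
    (fun ω' _ => by by_cases h : X ω' = X ω <;> simp [h, hp0 ω']) (Finset.mem_univ ω)
  simpa [pr] using this

lemma aux_pr_pos_exists {A : Type*} {X : Ω → A} {a : A}
    (h : 0 < pr p X a) : ∃ ω, p ω ≠ 0 ∧ X ω = a := by
  by_contra hc
  push_neg at hc
  have : pr p X a = 0 := Finset.sum_eq_zero fun ω _ => by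
    by_cases hx : X ω = a
    · simp [hx, by_contra fun hne => hc ω hne hx]
    · simp [hx]
  simp [this] at h

lemma aux_fiber {A B : Type*} [Fintype B] (p : Ω → ℝ) (U : Ω → A) (V : Ω → B) (a : A) :
    pr p U a = ∑ b, pr p (fun ω => (U ω, V ω)) (a, b) := by
  unfold pr
  rw [Finset.sum_comm]
  refine Finset.sum_congr rfl fun ω _ => ?_
  by_cases hU : U ω = a
  · simp [Prod.ext_iff, hU, Finset.sum_ite_eq]
  · simp [Prod.ext_iff, hU]

lemma aux_reindex {A B : Type*} (p : Ω → ℝ) (X : Ω → A) (σ : A → B)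
    (hσ : Function.Injective σ) (a : A) :
    pr p (fun ω => σ (X ω)) (σ a) = pr p X a := by
  unfold pr
  refine Finset.sum_congr rfl fun ω _ => ?_
  simp [hσ.eq_iff]

lemma aux_group {A : Type*} [Fintype A] (p : Ω → ℝ) (X : Ω → A) (F : A → ℝ) :
    ∑ ω, p ω * F (X ω) = ∑ a, pr p X a * F a := by
  unfold pr
  have h : ∀ a, (∑ ω, if X ω = a then p ω else 0) * F a
      = ∑ ω, (if X ω = a then p ω * F a else 0) := by
    intro a
    rw [Finset.sum_mul]
    exact Finset.sum_congr rfl fun ω _ => by by_cases h : X ω = a <;> simp [h]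
  simp_rw [h]
  rw [Finset.sum_comm]
  exact Finset.sum_congr rfl fun ω _ => by simp [Finset.sum_ite_eq]

end PR

/-- posterior predictive beats the plug-in change of measure. -/
theorem statement9 {Ω Θ ℋ 𝒴 : Type*} [Fintype Ω] [Fintype Θ] [Fintype ℋ] [Fintype 𝒴]
    (p : Ω → ℝ) (hp0 : ∀ ω, 0 ≤ p ω) (hp1 : ∑ ω, p ω = 1)
    (θ θt : Ω → Θ) (H : Ω → ℋ) (Y : Ω → 𝒴)
    (k : Θ → ℋ → 𝒴 → ℝ)
    (hkpmf : ∀ ν h, (∀ y, 0 ≤ k ν h y) ∧ ∑ y, k ν h y = 1)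
    (hk : ∀ ν h y, 0 < pr p (fun ω => (θ ω, H ω)) (ν, h) →
      condPr p Y (fun ω => (θ ω, H ω)) y (ν, h) = k ν h y)
    (hci : condMutualInfo p Y θt (fun ω => (θ ω, H ω)) = 0) :
    ∑ ω, ENNReal.ofReal (p ω) *
        klDivF (k (θ ω) (H ω))
          (fun y => condPr p Y (fun ω' => (θt ω', H ω')) y (θt ω, H ω))
      ≤ ∑ ω, ENNReal.ofReal (p ω) *
          klDivF (k (θ ω) (H ω)) (k (θt ω) (H ω)) := by
  classical
  -- joint pmf of ((Y, θt), (θ, H))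
  set q : (𝒴 × Θ) × (Θ × ℋ) → ℝ :=
    pr p (fun ω => ((Y ω, θt ω), (θ ω, H ω))) with hqdef
  set u : 𝒴 → Θ × ℋ → ℝ := fun y z => ∑ τ, q ((y, τ), z) with hudef
  set v : Θ → Θ × ℋ → ℝ := fun τ z => ∑ y, q ((y, τ), z) with hvdef
  set w : Θ × ℋ → ℝ := fun z => ∑ y, ∑ τ, q ((y, τ), z) with hwdef
  have hq0 : ∀ a, 0 ≤ q a := fun a => aux_pr_nonneg hp0 _ a
  have hu0 : ∀ y z, 0 ≤ u y z := fun y z => Finset.sum_nonneg fun τ _ => hq0 _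
  have hv0 : ∀ τ z, 0 ≤ v τ z := fun τ z => Finset.sum_nonneg fun y _ => hq0 _
  have hq_le_u : ∀ y τ z, q ((y, τ), z) ≤ u y z := fun y τ z =>
    Finset.single_le_sum (fun τ' _ => hq0 ((y, τ'), z)) (Finset.mem_univ τ)
  have hq_le_v : ∀ y τ z, q ((y, τ), z) ≤ v τ z := fun y τ z =>
    Finset.single_le_sum (fun y' _ => hq0 ((y', τ), z)) (Finset.mem_univ y)
  have hwu : ∀ z, w z = ∑ y, u y z := fun z => rfl
  have hwv : ∀ z, w z = ∑ τ, v τ z := fun z => by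
    simp only [hwdef, hvdef]; exact Finset.sum_comm
  have hu_le_w : ∀ y z, u y z ≤ w z := fun y z => by
    rw [hwu]
    exact Finset.single_le_sum (fun y' _ => hu0 y' z) (Finset.mem_univ y)
  have hv_le_w : ∀ τ z, v τ z ≤ w z := fun τ z => by
    rw [hwv]
    exact Finset.single_le_sum (fun τ' _ => hv0 τ' z) (Finset.mem_univ τ)
  have hw0 : ∀ z, 0 ≤ w z := fun z => Finset.sum_nonneg fun y _ =>
    Finset.sum_nonneg fun τ _ => hq0 _
  -- marginalization identities
  have hu_pr : ∀ y z, pr p (fun ω => (Y ω, (θ ω, H ω))) (y, z) = u y z := by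
    intro y z
    rw [aux_fiber p (fun ω => (Y ω, (θ ω, H ω))) θt (y, z)]
    simp only [hudef, hqdef]
    refine Finset.sum_congr rfl fun τ _ => ?_
    exact aux_reindex p (fun ω => ((Y ω, θt ω), (θ ω, H ω)))
      (fun a => ((a.1.1, a.2), a.1.2))
      (fun a b hab => by
        simp only [Prod.ext_iff] at hab ⊢
        tauto) ((y, τ), z)
  have hv_pr : ∀ τ z, pr p (fun ω => (θt ω, (θ ω, H ω))) (τ, z) = v τ z := by
    intro τ z
    rw [aux_fiber p (fun ω => (θt ω, (θ ω, H ω))) Y (τ, z)]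
    simp only [hvdef, hqdef]
    refine Finset.sum_congr rfl fun y _ => ?_
    exact aux_reindex p (fun ω => ((Y ω, θt ω), (θ ω, H ω)))
      (fun a => ((a.1.2, a.2), a.1.1))
      (fun a b hab => by
        simp only [Prod.ext_iff] at hab ⊢
        tauto) ((y, τ), z)
  have hw_pr : ∀ z, pr p (fun ω => (θ ω, H ω)) z = w z := by
    intro z
    rw [aux_fiber p (fun ω => (θ ω, H ω)) (fun ω => (Y ω, θt ω)) z]
    rw [Fintype.sum_prod_type]
    simp only [hwdef, hqdef]
    refine Finset.sum_congr rfl fun y _ => Finset.sum_congr rfl fun τ _ => ?_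
    exact aux_reindex p (fun ω => ((Y ω, θt ω), (θ ω, H ω)))
      (fun a => (a.2, a.1))
      (fun a b hab => by
        simp only [Prod.ext_iff] at hab ⊢
        tauto) ((y, τ), z)
  -- factorization from vanishing conditional mutual information
  -- entropy expansions
  have e1 : entropy p (fun ω => (Y ω, (θ ω, H ω))) = ∑ z, ∑ y, Real.negMulLog (u y z) := by
    rw [entropy, Fintype.sum_prod_type]
    simp_rw [hu_pr]
    exact Finset.sum_comm
  have e2 : entropy p (fun ω => (θt ω, (θ ω, H ω))) = ∑ z, ∑ τ, Real.negMulLog (v τ z) := by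
    rw [entropy, Fintype.sum_prod_type]
    simp_rw [hv_pr]
    exact Finset.sum_comm
  have e3 : entropy p (fun ω => ((Y ω, θt ω), (θ ω, H ω)))
      = ∑ z, ∑ y, ∑ τ, Real.negMulLog (q ((y, τ), z)) := by
    rw [entropy, Fintype.sum_prod_type]
    rw [Finset.sum_comm]
    refine Finset.sum_congr rfl fun z _ => ?_
    rw [Fintype.sum_prod_type]
  have e4 : entropy p (fun ω => (θ ω, H ω)) = ∑ z, Real.negMulLog (w z) := by
    rw [entropy]
    simp_rw [hw_pr]
  -- per-term log splitting
  have hsplit : ∀ y τ z, q ((y, τ), z) * Real.log (q ((y, τ), z) / (u y z * v τ z / w z))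
      = q ((y, τ), z) * Real.log (q ((y, τ), z)) + q ((y, τ), z) * Real.log (w z)
        - q ((y, τ), z) * Real.log (u y z) - q ((y, τ), z) * Real.log (v τ z) := by
    intro y τ z
    rcases (hq0 ((y, τ), z)).eq_or_lt with h0 | hpos
    · simp [← h0]
    · have hupos : 0 < u y z := lt_of_lt_of_le hpos (hq_le_u y τ z)
      have hvpos : 0 < v τ z := lt_of_lt_of_le hpos (hq_le_v y τ z)
      have hwpos : 0 < w z := lt_of_lt_of_le hupos (hu_le_w y z)
      rw [Real.log_div (ne_of_gt hpos) (by positivity),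
        Real.log_div (by positivity) (ne_of_gt hwpos),
        Real.log_mul (ne_of_gt hupos) (ne_of_gt hvpos)]
      ring
  -- conditional mutual information as a sum of per-z relative entropies
  have hGsum : ∑ z, ∑ y, ∑ τ, q ((y, τ), z)
        * Real.log (q ((y, τ), z) / (u y z * v τ z / w z)) = 0 := by
    rw [← hci, condMutualInfo, e1, e2, e3, e4]
    rw [← Finset.sum_add_distrib, ← Finset.sum_sub_distrib, ← Finset.sum_sub_distrib]
    refine Finset.sum_congr rfl fun z _ => ?_
    simp_rw [hsplit]
    have c1 : ∑ y, ∑ τ, q ((y, τ), z) * Real.log (w z) = w z * Real.log (w z) := by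
      simp_rw [← Finset.sum_mul]
      rfl
    have c2 : ∀ y, ∑ τ, q ((y, τ), z) * Real.log (u y z) = u y z * Real.log (u y z) := by
      intro y
      rw [← Finset.sum_mul]
    have c3 : ∑ y, ∑ τ, q ((y, τ), z) * Real.log (v τ z) = ∑ τ, v τ z * Real.log (v τ z) := by
      rw [Finset.sum_comm]
      refine Finset.sum_congr rfl fun τ _ => ?_
      rw [← Finset.sum_mul]
    have expand : ∑ y, ∑ τ, (q ((y, τ), z) * Real.log (q ((y, τ), z))
          + q ((y, τ), z) * Real.log (w z)
          - q ((y, τ), z) * Real.log (u y z) - q ((y, τ), z) * Real.log (v τ z))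
        = (∑ y, ∑ τ, q ((y, τ), z) * Real.log (q ((y, τ), z)))
          + (∑ y, ∑ τ, q ((y, τ), z) * Real.log (w z))
          - (∑ y, ∑ τ, q ((y, τ), z) * Real.log (u y z))
          - (∑ y, ∑ τ, q ((y, τ), z) * Real.log (v τ z)) := by
      simp [Finset.sum_add_distrib, Finset.sum_sub_distrib]
    rw [expand, c1, c3]
    simp_rw [c2]
    simp only [Real.negMulLog, neg_mul, Finset.sum_neg_distrib]
    ring
  have hGnonneg : ∀ z, 0 ≤ ∑ y, ∑ τ, q ((y, τ), z)
      * Real.log (q ((y, τ), z) / (u y z * v τ z / w z)) := by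
    intro z
    by_cases hwz : w z = 0
    · have hq00 : ∀ y τ, q ((y, τ), z) = 0 := fun y τ =>
        le_antisymm (le_trans (hq_le_u y τ z) (hwz ▸ hu_le_w y z)) (hq0 _)
      refine le_of_eq (Finset.sum_eq_zero fun y _ => Finset.sum_eq_zero fun τ _ => ?_).symm
      rw [hq00]
      ring
    · have hwpos : 0 < w z := lt_of_le_of_ne (hw0 z) (Ne.symm hwz)
      have hsumf : ∑ a : 𝒴 × Θ, q ((a.1, a.2), z) = w z := by
        rw [Fintype.sum_prod_type]
      have hsumg : ∑ a : 𝒴 × Θ, u a.1 z * v a.2 z / w z = w z := by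
        rw [Fintype.sum_prod_type]
        have hrow : ∀ y : 𝒴, ∑ τ, u y z * v τ z / w z = u y z := by
          intro y
          rw [← Finset.sum_div, ← Finset.mul_sum, ← hwv, mul_div_assoc, div_self hwz,
            mul_one]
        simp_rw [hrow]
        exact (hwu z).symm
      have hgibbs := aux_gibbs (fun a : 𝒴 × Θ => q ((a.1, a.2), z))
        (fun a : 𝒴 × Θ => u a.1 z * v a.2 z / w z)
        (fun a => hq0 _)
        (fun a => div_nonneg (mul_nonneg (hu0 _ _) (hv0 _ _)) (hw0 _))
        (le_of_eq (hsumg.trans hsumf.symm))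
        (fun a ha => by
          rcases div_eq_zero_iff.mp ha with h | h
          · rcases mul_eq_zero.mp h with h | h
            · exact le_antisymm (h ▸ hq_le_u a.1 a.2 z) (hq0 _)
            · exact le_antisymm (h ▸ hq_le_v a.1 a.2 z) (hq0 _)
          · exact absurd h hwz)
      calc (0:ℝ) ≤ ∑ a : 𝒴 × Θ, q ((a.1, a.2), z)
            * Real.log (q ((a.1, a.2), z) / (u a.1 z * v a.2 z / w z)) := hgibbs
        _ = _ := by rw [Fintype.sum_prod_type]
  have hGz : ∀ z, ∑ y, ∑ τ, q ((y, τ), z)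
      * Real.log (q ((y, τ), z) / (u y z * v τ z / w z)) = 0 := by
    intro z
    exact (Finset.sum_eq_zero_iff_of_nonneg (fun z' _ => hGnonneg z')).mp hGsum z
      (Finset.mem_univ z)
  have hfac : ∀ y τ z, q ((y, τ), z) * w z = u y z * v τ z := by
    intro y τ z
    by_cases hwz : w z = 0
    · have hu00 : u y z = 0 := le_antisymm (hwz ▸ hu_le_w y z) (hu0 y z)
      rw [hwz, hu00]
      ring
    · have hwpos : 0 < w z := lt_of_le_of_ne (hw0 z) (Ne.symm hwz)
      have hsumf : ∑ a : 𝒴 × Θ, q ((a.1, a.2), z) = w z := by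
        rw [Fintype.sum_prod_type]
      have hsumg : ∑ a : 𝒴 × Θ, u a.1 z * v a.2 z / w z = w z := by
        rw [Fintype.sum_prod_type]
        have hrow : ∀ y : 𝒴, ∑ τ, u y z * v τ z / w z = u y z := by
          intro y
          rw [← Finset.sum_div, ← Finset.mul_sum, ← hwv, mul_div_assoc, div_self hwz,
            mul_one]
        simp_rw [hrow]
        exact (hwu z).symm
      have hle : ∑ a : 𝒴 × Θ, q ((a.1, a.2), z)
          * Real.log (q ((a.1, a.2), z) / (u a.1 z * v a.2 z / w z)) ≤ 0 := by
        rw [Fintype.sum_prod_type]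
        exact le_of_eq (hGz z)
      have heq := aux_gibbs_eq (fun a : 𝒴 × Θ => q ((a.1, a.2), z))
        (fun a : 𝒴 × Θ => u a.1 z * v a.2 z / w z)
        (fun a => hq0 _)
        (fun a => div_nonneg (mul_nonneg (hu0 _ _) (hv0 _ _)) (hw0 _))
        (le_of_eq (hsumg.trans hsumf.symm))
        (fun a ha => by
          rcases div_eq_zero_iff.mp ha with h | h
          · rcases mul_eq_zero.mp h with h | h
            · exact le_antisymm (h ▸ hq_le_u a.1 a.2 z) (hq0 _)
            · exact le_antisymm (h ▸ hq_le_v a.1 a.2 z) (hq0 _)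
          · exact absurd h hwz) hle (y, τ)
      rw [eq_div_iff hwz] at heq
      exact heq
  -- u in terms of k
  have hu_k : ∀ ν h y, u y (ν, h) = k ν h y * w (ν, h) := by
    intro ν h y
    by_cases hwz : w (ν, h) = 0
    · rw [hwz, mul_zero]
      exact le_antisymm (hwz ▸ hu_le_w y (ν, h)) (hu0 y (ν, h))
    · have hwpos : 0 < w (ν, h) := lt_of_le_of_ne (hw0 _) (Ne.symm hwz)
      have hkk := hk ν h y (by rw [hw_pr]; exact hwpos)
      rw [condPr, hu_pr, hw_pr] at hkk
      rw [div_eq_iff hwz] at hkk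
      rw [hkk]
  -- the key pointwise identity
  have hqk : ∀ y τ ν h, q ((y, τ), (ν, h)) = k ν h y * v τ (ν, h) := by
    intro y τ ν h
    by_cases hwz : w (ν, h) = 0
    · have hv00 : v τ (ν, h) = 0 := le_antisymm (hwz ▸ hv_le_w τ (ν, h)) (hv0 _ _)
      have hq00 : q ((y, τ), (ν, h)) = 0 :=
        le_antisymm (le_trans (hq_le_v y τ (ν, h)) hv00.le) (hq0 _)
      rw [hq00, hv00, mul_zero]
    · have hf := hfac y τ (ν, h)
      rw [hu_k ν h y] at hf
      have : q ((y, τ), (ν, h)) * w (ν, h) = k ν h y * v τ (ν, h) * w (ν, h) := by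
        rw [hf]; ring
      exact mul_right_cancel₀ hwz this
  -- further marginalizations
  have hT_pr : ∀ τ h, pr p (fun ω => (θt ω, H ω)) (τ, h) = ∑ ν, v τ (ν, h) := by
    intro τ h
    rw [aux_fiber p (fun ω => (θt ω, H ω)) θ (τ, h)]
    refine Finset.sum_congr rfl fun ν _ => ?_
    rw [← hv_pr τ (ν, h)]
    exact aux_reindex p (fun ω => (θt ω, (θ ω, H ω)))
      (fun s => ((s.1, s.2.2), s.2.1))
      (fun a b hab => by
        simp only [Prod.ext_iff] at hab ⊢
        tauto) (τ, (ν, h))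
  have hN_pr : ∀ y τ h, pr p (fun ω => (Y ω, (θt ω, H ω))) (y, (τ, h))
      = ∑ ν, q ((y, τ), (ν, h)) := by
    intro y τ h
    rw [aux_fiber p (fun ω => (Y ω, (θt ω, H ω))) θ (y, (τ, h))]
    simp only [hqdef]
    refine Finset.sum_congr rfl fun ν _ => ?_
    exact aux_reindex p (fun ω => ((Y ω, θt ω), (θ ω, H ω)))
      (fun a => ((a.1.1, (a.1.2, a.2.2)), a.2.1))
      (fun a b hab => by
        simp only [Prod.ext_iff] at hab ⊢
        tauto) ((y, τ), (ν, h))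
  have hNk : ∀ y τ h, pr p (fun ω => (Y ω, (θt ω, H ω))) (y, (τ, h))
      = ∑ ν, k ν h y * v τ (ν, h) := by
    intro y τ h
    rw [hN_pr]
    exact Finset.sum_congr rfl fun ν _ => hqk y τ ν h
  have hTN : ∀ τ h, pr p (fun ω => (θt ω, H ω)) (τ, h)
      = ∑ y, pr p (fun ω => (Y ω, (θt ω, H ω))) (y, (τ, h)) := by
    intro τ h
    rw [aux_fiber p (fun ω => (θt ω, H ω)) Y (τ, h)]
    refine Finset.sum_congr rfl fun y _ => ?_
    exact aux_reindex p (fun ω => (Y ω, (θt ω, H ω))) Prod.swap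
      Prod.swap_injective (y, (τ, h))
  have hT0 : ∀ τ h, 0 ≤ pr p (fun ω => (θt ω, H ω)) (τ, h) := fun τ h =>
    aux_pr_nonneg hp0 _ _
  have hN0 : ∀ y τ h, 0 ≤ pr p (fun ω => (Y ω, (θt ω, H ω))) (y, (τ, h)) := fun y τ h =>
    aux_pr_nonneg hp0 _ _
  -- the predictive distribution
  set m : Θ → ℋ → 𝒴 → ℝ := fun τ h y =>
    pr p (fun ω => (Y ω, (θt ω, H ω))) (y, (τ, h)) / pr p (fun ω => (θt ω, H ω)) (τ, h)
    with hmdef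
  have hm0 : ∀ τ h y, 0 ≤ m τ h y := fun τ h y =>
    div_nonneg (hN0 y τ h) (hT0 τ h)
  have hmsum1 : ∀ τ h, pr p (fun ω => (θt ω, H ω)) (τ, h) ≠ 0 → ∑ y, m τ h y = 1 := by
    intro τ h hTz
    simp only [hmdef]
    rw [← Finset.sum_div, ← hTN, div_self hTz]
  -- main case split: absolute continuity of the plug-in pair on the support
  by_cases htop : ∀ ω, p ω ≠ 0 → ∀ y, k (θt ω) (H ω) y = 0 → k (θ ω) (H ω) y = 0
  · -- main case
    have hmabs : ∀ ω, p ω ≠ 0 → ∀ y, m (θt ω) (H ω) y = 0 → k (θ ω) (H ω) y = 0 := by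
      intro ω hpω y hm0y
      have hppos : 0 < p ω := lt_of_le_of_ne (hp0 ω) (Ne.symm hpω)
      have hTpos : 0 < pr p (fun ω' => (θt ω', H ω')) (θt ω, H ω) :=
        lt_of_lt_of_le hppos (aux_pr_self hp0 (fun ω' => (θt ω', H ω')) ω)
      have hvpos : 0 < v (θt ω) (θ ω, H ω) := by
        rw [← hv_pr]
        exact lt_of_lt_of_le hppos (aux_pr_self hp0 (fun ω' => (θt ω', (θ ω', H ω'))) ω)
      have hNz : pr p (fun ω' => (Y ω', (θt ω', H ω'))) (y, (θt ω, H ω)) = 0 := by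
        simp only [hmdef] at hm0y
        rcases div_eq_zero_iff.mp hm0y with h | h
        · exact h
        · exact absurd h (ne_of_gt hTpos)
      rw [hNk] at hNz
      have hterm := (Finset.sum_eq_zero_iff_of_nonneg
        (fun ν _ => mul_nonneg ((hkpmf ν (H ω)).1 y) (hv0 _ _))).mp hNz (θ ω)
        (Finset.mem_univ (θ ω))
      rcases mul_eq_zero.mp hterm with h | h
      · exact h
      · exact absurd h (ne_of_gt hvpos)
    have hL0 : ∀ ω, p ω ≠ 0 →
        0 ≤ ∑ y, k (θ ω) (H ω) y * Real.log (k (θ ω) (H ω) y / m (θt ω) (H ω) y) := by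
      intro ω hpω
      have hppos : 0 < p ω := lt_of_le_of_ne (hp0 ω) (Ne.symm hpω)
      have hTpos : 0 < pr p (fun ω' => (θt ω', H ω')) (θt ω, H ω) :=
        lt_of_lt_of_le hppos (aux_pr_self hp0 (fun ω' => (θt ω', H ω')) ω)
      exact aux_gibbs _ _ (hkpmf _ _).1 (hm0 _ _)
        (le_of_eq ((hmsum1 _ _ (ne_of_gt hTpos)).trans (hkpmf (θ ω) (H ω)).2.symm))
        (hmabs ω hpω)
    have hR0 : ∀ ω, p ω ≠ 0 →
        0 ≤ ∑ y, k (θ ω) (H ω) y * Real.log (k (θ ω) (H ω) y / k (θt ω) (H ω) y) := by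
      intro ω hpω
      exact aux_gibbs _ _ (hkpmf _ _).1 (hkpmf _ _).1
        (le_of_eq ((hkpmf (θt ω) (H ω)).2.trans (hkpmf (θ ω) (H ω)).2.symm))
        (htop ω hpω)
    set RL : Ω → ℝ := fun ω => if p ω = 0 then 0 else
      ∑ y, k (θ ω) (H ω) y * Real.log (k (θ ω) (H ω) y / m (θt ω) (H ω) y) with hRLdef
    set RR : Ω → ℝ := fun ω => if p ω = 0 then 0 else
      ∑ y, k (θ ω) (H ω) y * Real.log (k (θ ω) (H ω) y / k (θt ω) (H ω) y) with hRRdef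
    have hLterm : ∀ ω, ENNReal.ofReal (p ω) *
        klDivF (k (θ ω) (H ω))
          (fun y => condPr p Y (fun ω' => (θt ω', H ω')) y (θt ω, H ω))
        = ENNReal.ofReal (p ω * RL ω) := by
      intro ω
      by_cases hpω : p ω = 0
      · simp [hpω]
      · have hcond : (fun y => condPr p Y (fun ω' => (θt ω', H ω')) y (θt ω, H ω))
            = m (θt ω) (H ω) := by
          funext y
          simp only [hmdef, condPr]
        rw [hcond, klDivF, if_pos (hmabs ω hpω), ← ENNReal.ofReal_mul (hp0 ω)]
        simp only [hRLdef, if_neg hpω]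
    have hRterm : ∀ ω, ENNReal.ofReal (p ω) *
        klDivF (k (θ ω) (H ω)) (k (θt ω) (H ω))
        = ENNReal.ofReal (p ω * RR ω) := by
      intro ω
      by_cases hpω : p ω = 0
      · simp [hpω]
      · rw [klDivF, if_pos (htop ω hpω), ← ENNReal.ofReal_mul (hp0 ω)]
        simp only [hRRdef, if_neg hpω]
    have hRLnn : ∀ ω, 0 ≤ p ω * RL ω := by
      intro ω
      by_cases hpω : p ω = 0
      · simp [hpω]
      · refine mul_nonneg (hp0 ω) ?_
        simp only [hRLdef, if_neg hpω]
        exact hL0 ω hpω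
    have hRRnn : ∀ ω, 0 ≤ p ω * RR ω := by
      intro ω
      by_cases hpω : p ω = 0
      · simp [hpω]
      · refine mul_nonneg (hp0 ω) ?_
        simp only [hRRdef, if_neg hpω]
        exact hR0 ω hpω
    -- the real-valued inequality
    have hreal : ∑ ω, p ω * RL ω ≤ ∑ ω, p ω * RR ω := by
      set Df : Θ × (Θ × ℋ) → ℝ := fun s =>
        ∑ y, k s.2.1 s.2.2 y * Real.log (m s.1 s.2.2 y / k s.1 s.2.2 y) with hDfdef
      have hdiff : ∀ ω, p ω * RR ω - p ω * RL ω = p ω * Df (θt ω, (θ ω, H ω)) := by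
        intro ω
        by_cases hpω : p ω = 0
        · simp [hpω]
        · rw [← mul_sub]
          congr 1
          simp only [hRLdef, hRRdef, hDfdef, if_neg hpω]
          rw [← Finset.sum_sub_distrib]
          refine Finset.sum_congr rfl fun y _ => ?_
          rcases ((hkpmf (θ ω) (H ω)).1 y).eq_or_lt with hk0 | hkpos
          · simp [← hk0]
          · have hktpos : 0 < k (θt ω) (H ω) y := by
              rcases ((hkpmf (θt ω) (H ω)).1 y).eq_or_lt with h0 | h
              · exact absurd (htop ω hpω y h0.symm) (ne_of_gt hkpos)
              · exact h
            have hmpos : 0 < m (θt ω) (H ω) y := by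
              rcases (hm0 (θt ω) (H ω) y).eq_or_lt with h0 | h
              · exact absurd (hmabs ω hpω y h0.symm) (ne_of_gt hkpos)
              · exact h
            rw [Real.log_div (ne_of_gt hkpos) (ne_of_gt hktpos),
              Real.log_div (ne_of_gt hkpos) (ne_of_gt hmpos),
              Real.log_div (ne_of_gt hmpos) (ne_of_gt hktpos)]
            ring
      have hS : 0 ≤ ∑ ω, p ω * Df (θt ω, (θ ω, H ω)) := by
        rw [aux_group p (fun ω => (θt ω, (θ ω, H ω))) Df]
        have hprv : ∀ s : Θ × (Θ × ℋ), pr p (fun ω => (θt ω, (θ ω, H ω))) s = v s.1 s.2 :=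
          fun s => hv_pr s.1 s.2
        simp_rw [hprv]
        rw [Fintype.sum_prod_type]
        refine Finset.sum_nonneg fun τ _ => ?_
        rw [Fintype.sum_prod_type, Finset.sum_comm]
        refine Finset.sum_nonneg fun h _ => ?_
        have step : ∀ ν, v τ (ν, h) * Df (τ, (ν, h))
            = ∑ y, k ν h y * v τ (ν, h) * Real.log (m τ h y / k τ h y) := by
          intro ν
          simp only [hDfdef]
          rw [Finset.mul_sum]
          exact Finset.sum_congr rfl fun y _ => by ring
        simp_rw [step]
        rw [Finset.sum_comm]
        have step2 : ∀ y, ∑ ν, k ν h y * v τ (ν, h) * Real.log (m τ h y / k τ h y)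
            = pr p (fun ω => (Y ω, (θt ω, H ω))) (y, (τ, h))
              * Real.log (m τ h y / k τ h y) := by
          intro y
          rw [← Finset.sum_mul, ← hNk]
        simp_rw [step2]
        by_cases hTz : pr p (fun ω => (θt ω, H ω)) (τ, h) = 0
        · have hNz : ∀ y, pr p (fun ω => (Y ω, (θt ω, H ω))) (y, (τ, h)) = 0 := by
            intro y
            have hTN' := hTN τ h
            rw [hTz] at hTN'
            exact (Finset.sum_eq_zero_iff_of_nonneg fun y' _ => hN0 y' τ h).mp hTN'.symm y
              (Finset.mem_univ y)
          refine le_of_eq (Finset.sum_eq_zero fun y _ => ?_).symm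
          rw [hNz y, zero_mul]
        · have hTpos : 0 < pr p (fun ω => (θt ω, H ω)) (τ, h) :=
            lt_of_le_of_ne (hT0 τ h) (Ne.symm hTz)
          have habs2 : ∀ y, k τ h y = 0 → m τ h y = 0 := by
            intro y hk0
            have hNz : pr p (fun ω => (Y ω, (θt ω, H ω))) (y, (τ, h)) = 0 := by
              rw [hNk]
              refine Finset.sum_eq_zero fun ν _ => ?_
              by_cases hvz : v τ (ν, h) = 0
              · rw [hvz, mul_zero]
              · have hvpos : 0 < v τ (ν, h) := lt_of_le_of_ne (hv0 τ (ν, h)) (Ne.symm hvz)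
                have hex : 0 < pr p (fun ω => (θt ω, (θ ω, H ω))) (τ, (ν, h)) := by
                  rw [hv_pr]; exact hvpos
                obtain ⟨ω₁, hp₁, hV₁⟩ := aux_pr_pos_exists hex
                obtain ⟨h1, h2, h3⟩ : θt ω₁ = τ ∧ θ ω₁ = ν ∧ H ω₁ = h := by
                  simpa [Prod.ext_iff] using hV₁
                have hzz := htop ω₁ hp₁ y
                rw [h1, h2, h3] at hzz
                rw [hzz hk0, zero_mul]
            simp only [hmdef]
            rw [hNz, zero_div]
          have hgibbs := aux_gibbs (m τ h) (k τ h) (hm0 τ h) (hkpmf τ h).1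
            (le_of_eq ((hkpmf τ h).2.trans (hmsum1 τ h hTz).symm)) habs2
          have hNm : ∀ y, pr p (fun ω => (Y ω, (θt ω, H ω))) (y, (τ, h))
              = m τ h y * pr p (fun ω => (θt ω, H ω)) (τ, h) := by
            intro y
            simp only [hmdef]
            rw [div_mul_cancel₀ _ hTz]
          simp_rw [hNm]
          have hfin : ∑ y, m τ h y * pr p (fun ω => (θt ω, H ω)) (τ, h)
              * Real.log (m τ h y / k τ h y)
              = pr p (fun ω => (θt ω, H ω)) (τ, h)
                * ∑ y, m τ h y * Real.log (m τ h y / k τ h y) := by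
            rw [Finset.mul_sum]
            exact Finset.sum_congr rfl fun y _ => by ring
          rw [hfin]
          exact mul_nonneg (le_of_lt hTpos) hgibbs
      have hsum_eq : ∑ ω, (p ω * RR ω - p ω * RL ω)
          = ∑ ω, p ω * Df (θt ω, (θ ω, H ω)) :=
        Finset.sum_congr rfl fun ω _ => hdiff ω
      rw [Finset.sum_sub_distrib] at hsum_eq
      linarith
    calc ∑ ω, ENNReal.ofReal (p ω) *
          klDivF (k (θ ω) (H ω))
            (fun y => condPr p Y (fun ω' => (θt ω', H ω')) y (θt ω, H ω))
        = ∑ ω, ENNReal.ofReal (p ω * RL ω) :=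
          Finset.sum_congr rfl fun ω _ => hLterm ω
      _ = ENNReal.ofReal (∑ ω, p ω * RL ω) :=
          (ENNReal.ofReal_sum_of_nonneg fun ω _ => hRLnn ω).symm
      _ ≤ ENNReal.ofReal (∑ ω, p ω * RR ω) := ENNReal.ofReal_le_ofReal hreal
      _ = ∑ ω, ENNReal.ofReal (p ω * RR ω) :=
          ENNReal.ofReal_sum_of_nonneg fun ω _ => hRRnn ω
      _ = ∑ ω, ENNReal.ofReal (p ω) * klDivF (k (θ ω) (H ω)) (k (θt ω) (H ω)) :=
          Finset.sum_congr rfl fun ω _ => (hRterm ω).symm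
  · -- plug-in divergence is infinite somewhere on the support
    push_neg at htop
    obtain ⟨ω₀, hp₀, y₀, hky, hkn⟩ := htop
    have hRtop : klDivF (k (θ ω₀) (H ω₀)) (k (θt ω₀) (H ω₀)) = ⊤ := by
      rw [klDivF, if_neg]
      push_neg
      exact ⟨y₀, hky, hkn⟩
    have hsumtop : ∑ ω, ENNReal.ofReal (p ω) *
        klDivF (k (θ ω) (H ω)) (k (θt ω) (H ω)) = ⊤ := by
      refine ENNReal.sum_eq_top.mpr ⟨ω₀, Finset.mem_univ ω₀, ?_⟩
      rw [hRtop, ENNReal.mul_top]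
      simp only [ne_eq, ENNReal.ofReal_eq_zero, not_le]
      exact lt_of_le_of_ne (hp0 ω₀) (Ne.symm hp₀)
    rw [hsumtop]
    exact le_top

end
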